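/- Let M₁, M₂, … be i.i.d. random variables with values in [0,1], q > 0, and let R = q·Σ_{j=1}^∞ Π_{k=1}^{j−1} M_k (assume the series converges a.s.). Let (δ_n)_{n≥1} ⊂ (0,1) and define x₀ = q, x_n = q + (1 − δ_n) x_{n−1}. Then for every n ≥ 1, P(R > x_n) ≥ Π_{i=1}^n P(M > 1 − δ_i). -/

import Mathlib

open Filter Set MeasureTheory ProbabilityTheory

lemma aux_xpos (q : ℝ) (hq : 0 < q) (δ : ℕ → ℝ) (hδ : ∀ n, δ n ∈ Set.Ioo (0 : ℝ) 1)
    (x : ℕ → ℝ) (hx0 : x 0 = q) (hxn : ∀ n, x (n + 1) = q + (1 - δ (n + 1)) * x n) :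
    ∀ n, 0 < x n := by
  intro n
  induction n with
  | zero => simpa [hx0]
  | succ n ih =>
    have h := hδ (n + 1)
    rw [hxn]
    nlinarith [h.1, h.2]

lemma aux_sum (q : ℝ) (hq : 0 < q) (δ : ℕ → ℝ) (hδ : ∀ n, δ n ∈ Set.Ioo (0 : ℝ) 1)
    (x : ℕ → ℝ) (hx0 : x 0 = q) (hxn : ∀ n, x (n + 1) = q + (1 - δ (n + 1)) * x n) :
    ∀ n, ∀ a : ℕ → ℝ, (∀ k, 0 ≤ a k) → (∀ k < n, 1 - δ (n - k) < a k) →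
      x n ≤ q * ∑ j ∈ Finset.range (n + 1), ∏ k ∈ Finset.range j, a k ∧
      (1 ≤ n → x n < q * ∑ j ∈ Finset.range (n + 1), ∏ k ∈ Finset.range j, a k) := by
  intro n
  induction n with
  | zero =>
    intro a _ _
    simp [hx0]
  | succ n ih =>
    intro a ha hbd
    have hshift : ∀ k < n, 1 - δ (n - k) < (fun k => a (k + 1)) k := by
      intro k hk
      have := hbd (k + 1) (by omega)
      simpa [show n + 1 - (k + 1) = n - k by omega] using this
    obtain ⟨hle, _⟩ := ih (fun k => a (k + 1)) (fun k => ha (k + 1)) hshift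
    have hsplit : ∑ j ∈ Finset.range (n + 2), ∏ k ∈ Finset.range j, a k =
        1 + a 0 * ∑ j ∈ Finset.range (n + 1), ∏ k ∈ Finset.range j, a (k + 1) := by
      rw [Finset.sum_range_succ' (fun j => ∏ k ∈ Finset.range j, a k) (n + 1)]
      simp only [Finset.prod_range_zero]
      rw [Finset.mul_sum, add_comm]
      congr 1
      refine Finset.sum_congr rfl fun j _ => ?_
      rw [Finset.prod_range_succ' a j, mul_comm]
    have h0 := hbd 0 (by omega)
    simp only [Nat.sub_zero] at h0
    have hd := hδ (n + 1)
    have hxq : 0 < x n := aux_xpos q hq δ hδ x hx0 hxn n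
    have hS : x n ≤ q * ∑ j ∈ Finset.range (n + 1), ∏ k ∈ Finset.range j, a (k + 1) := hle
    have h1d : (0:ℝ) ≤ 1 - δ (n + 1) := by linarith [hd.2]
    have key : x (n + 1) < q * ∑ j ∈ Finset.range (n + 2), ∏ k ∈ Finset.range j, a k := by
      rw [hxn, hsplit, mul_add, mul_one, mul_comm q, mul_assoc]
      have ha0 : (1 - δ (n + 1)) * x n < a 0 * (q * ∑ j ∈ Finset.range (n + 1),
          ∏ k ∈ Finset.range j, a (k + 1)) := by
        calc (1 - δ (n + 1)) * x n < a 0 * x n := by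
              apply mul_lt_mul_of_pos_right h0 hxq
          _ ≤ a 0 * (q * ∑ j ∈ Finset.range (n + 1), ∏ k ∈ Finset.range j, a (k + 1)) := by
              apply mul_le_mul_of_nonneg_left hS (ha 0)
      linarith
    exact ⟨key.le, fun _ => key⟩

/-- Lower-bound recursion: for i.i.d. `M_k` with values in `[0,1]`,
`R = q Σ_j Π_{k<j} M_k`, `x₀ = q`, `x_n = q + (1−δ_n) x_{n−1}` with `δ_n ∈ (0,1)`,
we have `P(R > x_n) ≥ Π_{i=1}^n P(M_i > 1 − δ_i)`. -/
theorem stmt_5 {Ω : Type*} [MeasureSpace Ω] [IsProbabilityMeasure (ℙ : Measure Ω)]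
    (M : ℕ → Ω → ℝ) (hMmeas : ∀ i, Measurable (M i))
    (hindep : iIndepFun M ℙ)
    (hident : ∀ i, IdentDistrib (M i) (M 0) ℙ ℙ)
    (hM01 : ∀ i, ℙ {ω | M i ω ∈ Set.Icc (0 : ℝ) 1} = 1)
    (q : ℝ) (hq : 0 < q)
    (hconv : ∀ᵐ ω ∂ℙ, Summable (fun j => ∏ k ∈ Finset.range j, M k ω))
    (R : Ω → ℝ) (hRdef : ∀ ω, R ω = q * ∑' j : ℕ, ∏ k ∈ Finset.range j, M k ω)
    (δ : ℕ → ℝ) (hδ : ∀ n, δ n ∈ Set.Ioo (0 : ℝ) 1)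
    (x : ℕ → ℝ) (hx0 : x 0 = q) (hxn : ∀ n, x (n + 1) = q + (1 - δ (n + 1)) * x n) :
    ∀ n ≥ 1, (ℙ {ω | R ω > x n}).toReal ≥
      ∏ i ∈ Finset.Icc 1 n, (ℙ {ω | M i ω > 1 - δ i}).toReal := by
  intro n hn
  -- almost sure good set
  have hae : ∀ᵐ ω ∂ℙ, (∀ i, M i ω ∈ Set.Icc (0:ℝ) 1) ∧
      Summable (fun j => ∏ k ∈ Finset.range j, M k ω) := by
    refine Filter.Eventually.and ?_ hconv
    rw [MeasureTheory.ae_all_iff]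
    intro i
    have hmeas : MeasurableSet {ω | M i ω ∈ Set.Icc (0:ℝ) 1} :=
      (hMmeas i) measurableSet_Icc
    rw [MeasureTheory.ae_iff]
    have : {ω | ¬ M i ω ∈ Set.Icc (0:ℝ) 1} = {ω | M i ω ∈ Set.Icc (0:ℝ) 1}ᶜ := rfl
    rw [this, prob_compl_eq_zero_iff hmeas]
    exact hM01 i
  -- the independence event
  set A : Set Ω := ⋂ k ∈ Finset.range n, (M k) ⁻¹' Set.Ioi (1 - δ (n - k)) with hA
  -- inclusion
  have hsub : ℙ A ≤ ℙ {ω | R ω > x n} := by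
    apply measure_mono_ae
    filter_upwards [hae] with ω hω hωA
    have hbd : ∀ k < n, 1 - δ (n - k) < M k ω := by
      intro k hk
      have := Set.mem_iInter₂.mp (hA ▸ hωA) k (Finset.mem_range.mpr hk)
      exact this
    have hnn : ∀ k, 0 ≤ M k ω := fun k => (hω.1 k).1
    obtain ⟨_, hstrict⟩ := aux_sum q hq δ hδ x hx0 hxn n (fun k => M k ω) hnn hbd
    have h1 := hstrict hn
    have h2 : ∑ j ∈ Finset.range (n + 1), ∏ k ∈ Finset.range j, M k ω ≤
        ∑' j : ℕ, ∏ k ∈ Finset.range j, M k ω :=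
      Summable.sum_le_tsum _ (fun j _ => Finset.prod_nonneg fun k _ => hnn k) hω.2
    have : x n < R ω := by
      rw [hRdef]
      calc x n < q * ∑ j ∈ Finset.range (n + 1), ∏ k ∈ Finset.range j, M k ω := h1
        _ ≤ q * ∑' j : ℕ, ∏ k ∈ Finset.range j, M k ω :=
          mul_le_mul_of_nonneg_left h2 hq.le
    exact this
  -- independence computation
  have hAmeas : ℙ A = ∏ k ∈ Finset.range n, ℙ ((M k) ⁻¹' Set.Ioi (1 - δ (n - k))) := by
    exact hindep.meas_biInter (fun k _ => ⟨Set.Ioi (1 - δ (n - k)), measurableSet_Ioi, rfl⟩)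
  have hident' : ∀ (i : ℕ) (t : ℝ), ℙ ((M i) ⁻¹' Set.Ioi t) = ℙ ((M 0) ⁻¹' Set.Ioi t) :=
    fun i t => (hident i).measure_mem_eq measurableSet_Ioi
  have hprod : ∏ k ∈ Finset.range n, ℙ ((M k) ⁻¹' Set.Ioi (1 - δ (n - k))) =
      ∏ i ∈ Finset.Icc 1 n, ℙ ((M i) ⁻¹' Set.Ioi (1 - δ i)) := by
    calc ∏ k ∈ Finset.range n, ℙ ((M k) ⁻¹' Set.Ioi (1 - δ (n - k)))
        = ∏ k ∈ Finset.range n, ℙ ((M 0) ⁻¹' Set.Ioi (1 - δ (n - k))) := by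
          exact Finset.prod_congr rfl fun k _ => hident' k _
      _ = ∏ i ∈ Finset.Icc 1 n, ℙ ((M 0) ⁻¹' Set.Ioi (1 - δ i)) := by
          refine Finset.prod_nbij' (fun k => n - k) (fun i => n - i) ?_ ?_ ?_ ?_ ?_
          · intro k hk; simp only [Finset.mem_range] at hk
            simp only [Finset.mem_Icc]; omega
          · intro i hi; simp only [Finset.mem_Icc] at hi
            simp only [Finset.mem_range]; omega
          · intro k hk; simp only [Finset.mem_range] at hk; show n - (n - k) = k; omega
          · intro i hi; simp only [Finset.mem_Icc] at hi; show n - (n - i) = i; omega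
          · intro k _; rfl
      _ = ∏ i ∈ Finset.Icc 1 n, ℙ ((M i) ⁻¹' Set.Ioi (1 - δ i)) := by
          exact Finset.prod_congr rfl fun i _ => (hident' i _).symm
  have hsets : ∀ i, {ω | M i ω > 1 - δ i} = (M i) ⁻¹' Set.Ioi (1 - δ i) := fun i => rfl
  rw [ge_iff_le]
  calc ∏ i ∈ Finset.Icc 1 n, (ℙ {ω | M i ω > 1 - δ i}).toReal
      = (∏ i ∈ Finset.Icc 1 n, ℙ {ω | M i ω > 1 - δ i}).toReal := (ENNReal.toReal_prod _ _).symm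
    _ ≤ (ℙ {ω | R ω > x n}).toReal := by
        apply ENNReal.toReal_mono (measure_ne_top _ _)
        calc ∏ i ∈ Finset.Icc 1 n, ℙ {ω | M i ω > 1 - δ i}
            = ℙ A := by
              rw [hAmeas, hprod]
              exact Finset.prod_congr rfl fun i _ => by rw [hsets]
          _ ≤ ℙ {ω | R ω > x n} := hsub
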